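/- The Perron eigenvalue survives one mixing window: under (HP1)–(HP3), λ_n^{T_n} → 1 as n → ∞. -/

import Mathlib

open Finset Filter

/-- The kernel of the chain killed at `x`: all entries from or to `x` are set to zero.
For `y, z ≠ x` the powers of `killed P x` agree with the powers of the principal
submatrix `[P]_x` of `P` obtained by deleting the row and the column indexed by `x`. -/
def killed {n : ℕ} (P : Matrix (Fin n) (Fin n) ℝ) (x : Fin n) :
    Matrix (Fin n) (Fin n) ℝ :=
  Matrix.of fun y z => if y = x ∨ z = x then 0 else P y z

/-- The no-hit probability `ℙ_α(τ_x > t) = Σ_{y ≠ x} Σ_{z ≠ x} α(y)·([P]_x)^t(y,z)`. -/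
def noHit {n : ℕ} (P : Matrix (Fin n) (Fin n) ℝ) (x : Fin n)
    (a : Fin n → ℝ) (t : ℕ) : ℝ :=
  ∑ y ∈ Finset.univ.erase x, ∑ z ∈ Finset.univ.erase x, a y * ((killed P x) ^ t) y z

/-- The expected number of returns to `x` within time `T`:
`R_T(x) = Σ_{t=0}^{T} P^t(x,x)`. -/
def returns {n : ℕ} (P : Matrix (Fin n) (Fin n) ℝ) (x : Fin n) (T : ℕ) : ℝ :=
  ∑ t ∈ Finset.range (T + 1), (P ^ t) x x

lemma killed_apply {n : ℕ} (P : Matrix (Fin n) (Fin n) ℝ) (x y z : Fin n) :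
    killed P x y z = if y = x ∨ z = x then 0 else P y z := rfl

lemma vecMul_apply' {n : ℕ} (v : Fin n → ℝ) (M : Matrix (Fin n) (Fin n) ℝ) (j : Fin n) :
    Matrix.vecMul v M j = ∑ i, v i * M i j := by
  simp [Matrix.vecMul, dotProduct]

lemma killed_nonneg {n : ℕ} {P : Matrix (Fin n) (Fin n) ℝ} {x : Fin n}
    (hP : ∀ y z, 0 ≤ P y z) (y z : Fin n) : 0 ≤ killed P x y z := by
  rw [killed_apply]
  split
  · exact le_rfl
  · exact hP y z

lemma killed_le {n : ℕ} {P : Matrix (Fin n) (Fin n) ℝ} {x : Fin n}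
    (hP : ∀ y z, 0 ≤ P y z) (y z : Fin n) : killed P x y z ≤ P y z := by
  rw [killed_apply]
  split
  · exact hP y z
  · exact le_rfl

lemma pow_entry_nonneg {n : ℕ} {A : Matrix (Fin n) (Fin n) ℝ}
    (hA : ∀ y z, 0 ≤ A y z) : ∀ (m : ℕ) (y z : Fin n), 0 ≤ (A ^ m) y z := by
  intro m
  induction m with
  | zero =>
    intro y z
    rw [pow_zero, Matrix.one_apply]
    split <;> norm_num
  | succ m ih =>
    intro y z
    rw [pow_succ, Matrix.mul_apply]
    exact Finset.sum_nonneg fun w _ => mul_nonneg (ih y w) (hA w z)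

lemma pow_entry_le {n : ℕ} {A B : Matrix (Fin n) (Fin n) ℝ}
    (hA : ∀ y z, 0 ≤ A y z) (hAB : ∀ y z, A y z ≤ B y z) :
    ∀ (m : ℕ) (y z : Fin n), (A ^ m) y z ≤ (B ^ m) y z := by
  have hB : ∀ y z, 0 ≤ B y z := fun y z => le_trans (hA y z) (hAB y z)
  intro m
  induction m with
  | zero => intro y z; rw [pow_zero]; exact le_rfl
  | succ m ih =>
    intro y z
    rw [pow_succ, pow_succ, Matrix.mul_apply, Matrix.mul_apply]
    refine Finset.sum_le_sum fun w _ => ?_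
    exact mul_le_mul (ih y w) (hAB w z) (hA w z) (pow_entry_nonneg hB m y w)

lemma rowsum_pow {n : ℕ} {P : Matrix (Fin n) (Fin n) ℝ}
    (hrow : ∀ y, ∑ z, P y z = 1) : ∀ (m : ℕ) (y : Fin n), ∑ z, (P ^ m) y z = 1 := by
  intro m
  induction m with
  | zero => intro y; simp [Matrix.one_apply]
  | succ m ih =>
    intro y
    simp only [pow_succ, Matrix.mul_apply]
    rw [Finset.sum_comm]
    simp_rw [← Finset.mul_sum, hrow, mul_one]
    exact ih y

lemma vecMul_pow_eig {n : ℕ} {K : Matrix (Fin n) (Fin n) ℝ} {μ : Fin n → ℝ} {lam : ℝ}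
    (h : Matrix.vecMul μ K = lam • μ) :
    ∀ m : ℕ, Matrix.vecMul μ (K ^ m) = lam ^ m • μ := by
  intro m
  induction m with
  | zero => rw [pow_zero, Matrix.vecMul_one, pow_zero, one_smul]
  | succ m ih =>
    rw [pow_succ, ← Matrix.vecMul_vecMul, ih]
    have h2 : Matrix.vecMul (lam ^ m • μ) K = lam ^ m • Matrix.vecMul μ K := by
      funext j
      simp [vecMul_apply', Pi.smul_apply, smul_eq_mul, Finset.mul_sum, mul_assoc]
    rw [h2, h, smul_smul, ← pow_succ]

lemma vecMul_pow_fix {n : ℕ} {P : Matrix (Fin n) (Fin n) ℝ} {π : Fin n → ℝ}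
    (h : Matrix.vecMul π P = π) : ∀ m : ℕ, Matrix.vecMul π (P ^ m) = π := by
  intro m
  induction m with
  | zero => rw [pow_zero, Matrix.vecMul_one]
  | succ m ih => rw [pow_succ, ← Matrix.vecMul_vecMul, ih, h]

lemma vecMul_pow_ge {n : ℕ} {P K : Matrix (Fin n) (Fin n) ℝ} {μ : Fin n → ℝ} {lam : ℝ}
    (hμ : ∀ y, 0 ≤ μ y) (hP : ∀ y z, 0 ≤ P y z)
    (hKP : ∀ y z, K y z ≤ P y z) (heig : Matrix.vecMul μ K = lam • μ)
    (hlam0 : 0 ≤ lam) :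
    ∀ (m : ℕ) (z : Fin n), lam ^ m * μ z ≤ Matrix.vecMul μ (P ^ m) z := by
  intro m
  induction m with
  | zero => intro z; simp [Matrix.vecMul_one]
  | succ m ih =>
    intro z
    have hKz : Matrix.vecMul μ K z ≤ Matrix.vecMul μ P z := by
      rw [vecMul_apply', vecMul_apply']
      exact Finset.sum_le_sum fun w _ => mul_le_mul_of_nonneg_left (hKP w z) (hμ w)
    have hKzval : Matrix.vecMul μ K z = lam * μ z := by
      rw [heig]; simp
    calc lam ^ (m + 1) * μ z = lam ^ m * (lam * μ z) := by ring
      _ = lam ^ m * Matrix.vecMul μ K z := by rw [hKzval]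
      _ ≤ lam ^ m * Matrix.vecMul μ P z :=
          mul_le_mul_of_nonneg_left hKz (pow_nonneg hlam0 m)
      _ = ∑ w, (lam ^ m * μ w) * P w z := by
          rw [vecMul_apply', Finset.mul_sum]; simp_rw [mul_assoc]
      _ ≤ ∑ w, Matrix.vecMul μ (P ^ m) w * P w z :=
          Finset.sum_le_sum fun w _ => mul_le_mul_of_nonneg_right (ih w) (hP w z)
      _ = Matrix.vecMul μ (P ^ (m + 1)) z := by
          rw [pow_succ, ← Matrix.vecMul_vecMul, vecMul_apply']

lemma survival_lb {n : ℕ} {P : Matrix (Fin n) (Fin n) ℝ} {x : Fin n}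
    (hP : ∀ y z, 0 ≤ P y z) (hrow : ∀ y, ∑ z, P y z = 1) :
    ∀ (m : ℕ) (y : Fin n), y ≠ x →
      1 - (∑ t ∈ Finset.range m, (P ^ (t + 1)) y x) ≤ ∑ z, ((killed P x) ^ m) y z := by
  intro m
  induction m with
  | zero =>
    intro y _
    simp [Matrix.one_apply]
  | succ m ih =>
    intro y hy
    have expand : ∑ z, ((killed P x) ^ (m + 1)) y z
        = ∑ w, (killed P x) y w * (∑ z, ((killed P x) ^ m) w z) := by
      simp only [pow_succ', Matrix.mul_apply]
      rw [Finset.sum_comm]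
      simp_rw [← Finset.mul_sum]
    have step1 : ∀ w : Fin n,
        (killed P x) y w * (1 - ∑ t ∈ Finset.range m, (P ^ (t + 1)) w x)
          ≤ (killed P x) y w * (∑ z, ((killed P x) ^ m) w z) := by
      intro w
      by_cases hw : w = x
      · subst hw
        rw [killed_apply]
        simp
      · exact mul_le_mul_of_nonneg_left (ih w hw) (killed_nonneg hP y w)
    have lower := Finset.sum_le_sum (fun w (_ : w ∈ Finset.univ) => step1 w)
    have hexp : ∑ w, (killed P x) y w * (1 - ∑ t ∈ Finset.range m, (P ^ (t + 1)) w x)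
        = (∑ w, (killed P x) y w)
          - ∑ w, (killed P x) y w * ∑ t ∈ Finset.range m, (P ^ (t + 1)) w x := by
      simp_rw [mul_sub, mul_one, Finset.sum_sub_distrib]
    have hKrow : ∑ w, (killed P x) y w = 1 - P y x := by
      have hpt : ∀ w : Fin n, (killed P x) y w = P y w - (if w = x then P y x else 0) := by
        intro w
        rw [killed_apply]
        by_cases hw : w = x <;> simp [hw, hy]
      simp_rw [hpt, Finset.sum_sub_distrib, hrow y]
      congr 1
      rw [Finset.sum_ite_eq' Finset.univ x (fun _ => P y x)]
      simp
    have hcross : ∑ w, (killed P x) y w * (∑ t ∈ Finset.range m, (P ^ (t + 1)) w x)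
        ≤ ∑ t ∈ Finset.range m, (P ^ (t + 2)) y x := by
      have h1 : ∑ w, (killed P x) y w * (∑ t ∈ Finset.range m, (P ^ (t + 1)) w x)
          ≤ ∑ w, P y w * (∑ t ∈ Finset.range m, (P ^ (t + 1)) w x) := by
        refine Finset.sum_le_sum fun w _ => ?_
        exact mul_le_mul_of_nonneg_right (killed_le hP y w)
          (Finset.sum_nonneg fun t _ => pow_entry_nonneg hP (t + 1) w x)
      have h2 : ∑ w, P y w * (∑ t ∈ Finset.range m, (P ^ (t + 1)) w x)
          = ∑ t ∈ Finset.range m, (P ^ (t + 2)) y x := by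
        simp_rw [Finset.mul_sum]
        rw [Finset.sum_comm]
        refine Finset.sum_congr rfl fun t _ => ?_
        have hp : P ^ (t + 2) = P * P ^ (t + 1) := pow_succ' P (t + 1)
        rw [hp, Matrix.mul_apply]
      linarith
    have hsplit : ∑ t ∈ Finset.range (m + 1), (P ^ (t + 1)) y x
        = (∑ t ∈ Finset.range m, (P ^ (t + 2)) y x) + P y x := by
      rw [Finset.sum_range_succ']
      simp [pow_one]
    rw [expand, hsplit]
    linarith [lower, hexp ▸ lower]

set_option maxHeartbeats 2000000 in
theorem perron_eigenvalue_survives_mixing_window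
    (P : (n : ℕ) → Matrix (Fin n) (Fin n) ℝ)
    (pi : (n : ℕ) → Fin n → ℝ)
    (x : (n : ℕ) → Fin n)
    (T : ℕ → ℕ) (c : ℝ)
    (hc : 2 < c)
    (hT : Filter.Tendsto T Filter.atTop Filter.atTop)
    (hnn : ∀ n : ℕ, 2 ≤ n → ∀ y z : Fin n, 0 ≤ P n y z)
    (hrow : ∀ n : ℕ, 2 ≤ n → ∀ y : Fin n, ∑ z, P n y z = 1)
    (hirr : ∀ n : ℕ, 2 ≤ n → ∀ y z : Fin n, ∃ t : ℕ, 0 < (P n ^ t) y z)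
    (hpinn : ∀ n : ℕ, 2 ≤ n → ∀ y : Fin n, 0 ≤ pi n y)
    (hpisum : ∀ n : ℕ, 2 ≤ n → ∑ y, pi n y = 1)
    (hpistat : ∀ n : ℕ, 2 ≤ n → Matrix.vecMul (pi n) (P n) = pi n)
    (hpiuniq : ∀ n : ℕ, 2 ≤ n → ∀ rho : Fin n → ℝ, (∀ y, 0 ≤ rho y) →
      (∑ y, rho y = 1) → Matrix.vecMul rho (P n) = rho → rho = pi n)
    (hkirr : ∀ n : ℕ, 2 ≤ n → ∀ y z : Fin n, y ≠ x n → z ≠ x n →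
      ∃ t : ℕ, 0 < ((killed (P n) (x n)) ^ t) y z)
    (lam : ℕ → ℝ) (mu : (n : ℕ) → Fin n → ℝ)
    (hlam : ∀ n : ℕ, 2 ≤ n → lam n ∈ Set.Ioo (0 : ℝ) 1)
    (hmunn : ∀ n : ℕ, 2 ≤ n → ∀ y : Fin n, 0 ≤ mu n y)
    (hmux : ∀ n : ℕ, 2 ≤ n → mu n (x n) = 0)
    (hmusum : ∀ n : ℕ, 2 ≤ n → ∑ y, mu n y = 1)
    (hmuqs : ∀ n : ℕ, 2 ≤ n →
      Matrix.vecMul (mu n) (killed (P n) (x n)) = lam n • mu n)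
    (HP1 : ∀ ε : ℝ, 0 < ε → ∃ N : ℕ, ∀ n : ℕ, N ≤ n → ∀ y z : Fin n,
      (n : ℝ) ^ c * |(P n ^ T n) y z - pi n z| < ε)
    (HP2 : ∀ ε : ℝ, 0 < ε → ∃ N : ℕ, ∀ n : ℕ, N ≤ n → ∀ y : Fin n,
      (T n : ℝ) * pi n y < ε)
    (HP3 : ∀ M : ℝ, ∃ N : ℕ, ∀ n : ℕ, N ≤ n → ∀ y : Fin n,
      M < (n : ℝ) ^ 2 * pi n y)
    :
    Filter.Tendsto (fun n => lam n ^ T n) Filter.atTop (nhds (1 : ℝ)) := by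
  rw [Metric.tendsto_atTop]
  intro ε hε
  have he1pos : (0 : ℝ) < min (ε / 8) (1 / 100) := lt_min (by linarith) (by norm_num)
  set e1 : ℝ := min (ε / 8) (1 / 100) with he1def
  have he1le : e1 ≤ 1 / 100 := min_le_right _ _
  have he1ε : e1 ≤ ε / 8 := min_le_left _ _
  obtain ⟨N₁, hN₁⟩ := HP1 e1 he1pos
  obtain ⟨N₂, hN₂⟩ := HP2 e1 he1pos
  obtain ⟨N₃, hN₃⟩ := HP3 1
  obtain ⟨N₄, hN₄⟩ := Filter.eventually_atTop.mp (hT.eventually_ge_atTop 1)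
  refine ⟨max (max N₁ N₂) (max (max N₃ N₄) 2), fun n hn => ?_⟩
  have hn1' : N₁ ≤ n := le_trans (le_trans (le_max_left _ _) (le_max_left _ _)) hn
  have hn2' : N₂ ≤ n := le_trans (le_trans (le_max_right _ _) (le_max_left _ _)) hn
  have hn3' : N₃ ≤ n :=
    le_trans (le_trans (le_trans (le_max_left _ _) (le_max_left _ _)) (le_max_right _ _)) hn
  have hn4' : N₄ ≤ n :=
    le_trans (le_trans (le_trans (le_max_right _ _) (le_max_left _ _)) (le_max_right _ _)) hn
  have h2n : 2 ≤ n :=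
    le_trans (le_trans (le_max_right _ _) (le_max_right _ _)) hn
  -- basic facts
  have hPnn : ∀ y z : Fin n, 0 ≤ P n y z := hnn n h2n
  have hProw : ∀ y : Fin n, ∑ z, P n y z = 1 := hrow n h2n
  have hπnn : ∀ y : Fin n, 0 ≤ pi n y := hpinn n h2n
  have hπstat := hpistat n h2n
  have hμnn : ∀ y : Fin n, 0 ≤ mu n y := hmunn n h2n
  have hμx := hmux n h2n
  have hμsum := hmusum n h2n
  have hμeig := hmuqs n h2n
  have hlam0 : 0 < lam n := (hlam n h2n).1
  have hlam1 : lam n < 1 := (hlam n h2n).2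
  have hT1 : 1 ≤ T n := hN₄ n hn4'
  have hn0R : (0 : ℝ) < n := by
    have : (2 : ℝ) ≤ n := by exact_mod_cast h2n
    linarith
  have hn1R : (1 : ℝ) ≤ n := by
    have : (2 : ℝ) ≤ n := by exact_mod_cast h2n
    linarith
  have hncpos : (0 : ℝ) < (n : ℝ) ^ c := Real.rpow_pos_of_pos hn0R c
  set e : ℝ := e1 / (n : ℝ) ^ c with hedef
  have hepos : 0 < e := div_pos he1pos hncpos
  have hmixT : ∀ y z : Fin n, |(P n ^ T n) y z - pi n z| ≤ e := by
    intro y z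
    have h := hN₁ n hn1' y z
    have := (lt_div_iff₀' hncpos).mpr h
    exact le_of_lt this
  have hmix_ub : ∀ (s : ℕ) (y z : Fin n), (P n ^ (s + T n)) y z ≤ pi n z + e := by
    intro s y z
    rw [pow_add, Matrix.mul_apply]
    calc ∑ w, (P n ^ s) y w * (P n ^ T n) w z
        ≤ ∑ w, (P n ^ s) y w * (pi n z + e) := by
          refine Finset.sum_le_sum fun w _ => ?_
          refine mul_le_mul_of_nonneg_left ?_ (pow_entry_nonneg hPnn s y w)
          have := abs_le.mp (hmixT w z)
          linarith [this.2]
      _ = pi n z + e := by rw [← Finset.sum_mul, rowsum_pow hProw s y, one_mul]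
  have hmix_lb : ∀ (s : ℕ) (y z : Fin n), pi n z - e ≤ (P n ^ (s + T n)) y z := by
    intro s y z
    rw [pow_add, Matrix.mul_apply]
    calc pi n z - e = ∑ w, (P n ^ s) y w * (pi n z - e) := by
          rw [← Finset.sum_mul, rowsum_pow hProw s y, one_mul]
      _ ≤ ∑ w, (P n ^ s) y w * (P n ^ T n) w z := by
          refine Finset.sum_le_sum fun w _ => ?_
          refine mul_le_mul_of_nonneg_left ?_ (pow_entry_nonneg hPnn s y w)
          have := abs_le.mp (hmixT w z)
          linarith [this.1]
  have hTπ : ∀ y : Fin n, (T n : ℝ) * pi n y < e1 := hN₂ n hn2'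
  have hπlb : ∀ y : Fin n, 1 < (n : ℝ) ^ 2 * pi n y := hN₃ n hn3'
  have hπpos : ∀ y : Fin n, 0 < pi n y := by
    intro y
    have h := hπlb y
    nlinarith [sq_nonneg (n : ℝ)]
  have hπx_small : pi n (x n) < e1 := by
    have h1 : pi n (x n) ≤ (T n : ℝ) * pi n (x n) := by
      have hT1R : (1 : ℝ) ≤ (T n : ℝ) := by exact_mod_cast hT1
      nlinarith [hπnn (x n)]
    linarith [hTπ (x n)]
  have hn2c : (n : ℝ) ^ 2 ≤ (n : ℝ) ^ c := by
    have h1 : ((n : ℝ) ^ (2 : ℕ) : ℝ) = (n : ℝ) ^ ((2 : ℕ) : ℝ) :=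
      (Real.rpow_natCast _ 2).symm
    calc ((n : ℝ) ^ 2 : ℝ) = (n : ℝ) ^ ((2 : ℕ) : ℝ) := h1
      _ ≤ (n : ℝ) ^ c := by
          refine Real.rpow_le_rpow_of_exponent_le hn1R ?_
          push_cast
          linarith
  have hTe : (T n : ℝ) * e ≤ e1 * e1 := by
    have hn2pos : (0 : ℝ) < (n : ℝ) ^ 2 := by positivity
    have hTn2 : (T n : ℝ) < e1 * (n : ℝ) ^ 2 := by
      have h1 : (T n : ℝ) * ((1 : ℝ) / (n : ℝ) ^ 2) ≤ (T n : ℝ) * pi n (x n) := by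
        refine mul_le_mul_of_nonneg_left ?_ (by positivity)
        rw [div_le_iff₀ hn2pos]
        linarith [hπlb (x n)]
      have h2 : (T n : ℝ) * ((1 : ℝ) / (n : ℝ) ^ 2) < e1 := lt_of_le_of_lt h1 (hTπ (x n))
      rw [mul_one_div] at h2
      calc (T n : ℝ) = ((T n : ℝ) / (n : ℝ) ^ 2) * (n : ℝ) ^ 2 := by field_simp
        _ < e1 * (n : ℝ) ^ 2 := by
            exact mul_lt_mul_of_pos_right h2 hn2pos
    have he1nn : (0:ℝ) ≤ e1 := le_of_lt he1pos
    calc (T n : ℝ) * e = (T n : ℝ) * e1 / (n : ℝ) ^ c := by rw [hedef]; ring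
      _ ≤ (T n : ℝ) * e1 / (n : ℝ) ^ 2 := by
          refine div_le_div_of_nonneg_left ?_ hn2pos hn2c
          positivity
      _ ≤ e1 * (n : ℝ) ^ 2 * e1 / (n : ℝ) ^ 2 := by
          refine (div_le_div_iff_of_pos_right hn2pos).mpr ?_
          exact mul_le_mul_of_nonneg_right (le_of_lt hTn2) he1nn
      _ = e1 * e1 := by field_simp
  -- STEP 1: lam^(2T) ≥ 1/2
  set S : Fin n → ℝ := fun y => ∑ t ∈ Finset.range (2 * T n), (P n ^ (t + 1)) y (x n)
    with hSdef
  have hSnn : ∀ y, 0 ≤ S y := by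
    intro y
    rw [hSdef]
    exact Finset.sum_nonneg fun t _ => pow_entry_nonneg hPnn (t + 1) y (x n)
  have hπS : ∑ y, pi n y * S y = (2 * T n : ℕ) * pi n (x n) := by
    rw [hSdef]
    simp only
    simp_rw [Finset.mul_sum]
    rw [Finset.sum_comm]
    have hone : ∀ t : ℕ, ∑ y, pi n y * (P n ^ (t + 1)) y (x n) = pi n (x n) := by
      intro t
      rw [← vecMul_apply', vecMul_pow_fix hπstat (t + 1)]
    rw [Finset.sum_congr rfl fun t _ => hone t]
    rw [Finset.sum_const, Finset.card_range, nsmul_eq_mul]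
  have h2Tπ : ((2 * T n : ℕ) : ℝ) * pi n (x n) < 2 * e1 := by
    push_cast
    have := hTπ (x n)
    nlinarith [hπnn (x n)]
  set Gset : Finset (Fin n) := (Finset.univ.erase (x n)).filter (fun y => S y ≤ 1 / 3)
    with hGdef
  have hGsub : ∀ y ∈ Gset, y ≠ x n ∧ S y ≤ 1 / 3 := by
    intro y hy
    rw [hGdef, Finset.mem_filter, Finset.mem_erase] at hy
    exact ⟨hy.1.1, hy.2⟩
  have hGne : ∃ z₀, z₀ ∈ Gset := by
    by_contra hcon
    push_neg at hcon
    have hbig : ∀ y ∈ Finset.univ.erase (x n), 1 / 3 < S y := by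
      intro y hy
      by_contra hle
      push_neg at hle
      exact hcon y (by rw [hGdef, Finset.mem_filter]; exact ⟨hy, hle⟩)
    have herasesum : ∑ y ∈ Finset.univ.erase (x n), pi n y = 1 - pi n (x n) := by
      rw [Finset.sum_erase_eq_sub (Finset.mem_univ (x n)), hpisum n h2n]
    have h1 : (1 - pi n (x n)) * (1 / 3) ≤ ∑ y ∈ Finset.univ.erase (x n), pi n y * S y := by
      rw [← herasesum, Finset.sum_mul]
      refine Finset.sum_le_sum fun y hy => ?_
      exact mul_le_mul_of_nonneg_left (le_of_lt (hbig y hy)) (hπnn y)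
    have h2 : ∑ y ∈ Finset.univ.erase (x n), pi n y * S y ≤ ∑ y, pi n y * S y := by
      refine Finset.sum_le_sum_of_subset_of_nonneg (Finset.subset_univ _) fun y _ _ => ?_
      exact mul_nonneg (hπnn y) (hSnn y)
    have h3 := hπS
    linarith [hπx_small, h2Tπ]
  obtain ⟨z₀, hz₀G⟩ := hGne
  have hπG : 1 - pi n (x n) - 6 * e1 ≤ ∑ z ∈ Gset, pi n z := by
    have hsplit := Finset.sum_filter_add_sum_filter_not (Finset.univ.erase (x n))
      (fun y => S y ≤ 1 / 3) (pi n)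
    have herasesum : ∑ y ∈ Finset.univ.erase (x n), pi n y = 1 - pi n (x n) := by
      rw [Finset.sum_erase_eq_sub (Finset.mem_univ (x n)), hpisum n h2n]
    have hbad : ∑ y ∈ (Finset.univ.erase (x n)).filter (fun y => ¬ S y ≤ 1 / 3), pi n y
        ≤ 6 * e1 := by
      have hb1 : ∀ y ∈ (Finset.univ.erase (x n)).filter (fun y => ¬ S y ≤ 1 / 3),
          pi n y ≤ 3 * (pi n y * S y) := by
        intro y hy
        rw [Finset.mem_filter] at hy
        have h13 : 1 / 3 < S y := not_le.mp hy.2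
        nlinarith [hπnn y]
      calc ∑ y ∈ (Finset.univ.erase (x n)).filter (fun y => ¬ S y ≤ 1 / 3), pi n y
          ≤ ∑ y ∈ (Finset.univ.erase (x n)).filter (fun y => ¬ S y ≤ 1 / 3),
              3 * (pi n y * S y) := Finset.sum_le_sum hb1
        _ ≤ ∑ y, 3 * (pi n y * S y) := by
            refine Finset.sum_le_sum_of_subset_of_nonneg (Finset.subset_univ _) fun y _ _ => ?_
            have := mul_nonneg (hπnn y) (hSnn y)
            linarith
        _ = 3 * ((2 * T n : ℕ) * pi n (x n)) := by
            rw [← Finset.mul_sum, hπS]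
        _ ≤ 6 * e1 := by nlinarith [h2Tπ]
    rw [hGdef]
    linarith [hsplit, herasesum, hbad]
  have hcardG : ((Gset.card : ℝ)) * e ≤ e1 := by
    have hc1 : (Gset.card : ℝ) ≤ n := by
      have := Finset.card_le_univ Gset
      have h2 : (Finset.univ : Finset (Fin n)).card = n := by
        rw [Finset.card_univ, Fintype.card_fin]
      have h3 : Gset.card ≤ n := le_trans (Finset.card_le_univ Gset) (le_of_eq h2)
      exact_mod_cast h3
    have hne : (n : ℝ) ≤ (n : ℝ) ^ c := by
      calc (n : ℝ) = (n : ℝ) ^ (1 : ℝ) := (Real.rpow_one _).symm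
        _ ≤ (n : ℝ) ^ c := Real.rpow_le_rpow_of_exponent_le hn1R (by linarith)
    calc (Gset.card : ℝ) * e ≤ (n : ℝ) * e :=
          mul_le_mul_of_nonneg_right hc1 (le_of_lt hepos)
      _ = (n : ℝ) * e1 / (n : ℝ) ^ c := by rw [hedef]; ring
      _ ≤ (n : ℝ) ^ c * e1 / (n : ℝ) ^ c := by
          refine (div_le_div_iff_of_pos_right hncpos).mpr ?_
          exact mul_le_mul_of_nonneg_right hne (le_of_lt he1pos)
      _ = e1 := by field_simp
  have hKnn : ∀ y z : Fin n, 0 ≤ killed (P n) (x n) y z := killed_nonneg hPnn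
  have hKle : ∀ y z : Fin n, killed (P n) (x n) y z ≤ P n y z := killed_le hPnn
  have hkey : ∀ y ∈ Gset, (1 : ℝ) / 2 ≤ ∑ z ∈ Gset, ((killed (P n) (x n)) ^ (2 * T n)) y z := by
    intro y hyG
    obtain ⟨hyx, hyS⟩ := hGsub y hyG
    have hPK : ∑ z ∈ Gset, ((P n ^ (2 * T n)) y z - ((killed (P n) (x n)) ^ (2 * T n)) y z)
        ≤ S y := by
      calc ∑ z ∈ Gset, ((P n ^ (2 * T n)) y z - ((killed (P n) (x n)) ^ (2 * T n)) y z)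
          ≤ ∑ z, ((P n ^ (2 * T n)) y z - ((killed (P n) (x n)) ^ (2 * T n)) y z) := by
            refine Finset.sum_le_sum_of_subset_of_nonneg (Finset.subset_univ _) fun z _ _ => ?_
            exact sub_nonneg.mpr (pow_entry_le hKnn hKle (2 * T n) y z)
        _ = 1 - ∑ z, ((killed (P n) (x n)) ^ (2 * T n)) y z := by
            rw [Finset.sum_sub_distrib, rowsum_pow hProw]
        _ ≤ S y := by
            have := survival_lb hPnn hProw (2 * T n) y hyx
            rw [hSdef]
            simp only
            linarith
    have hmix2T : ∀ z : Fin n, pi n z - e ≤ (P n ^ (2 * T n)) y z := by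
      intro z
      have := hmix_lb (T n) y z
      rwa [← two_mul] at this
    have hPGlb : (∑ z ∈ Gset, pi n z) - e1 ≤ ∑ z ∈ Gset, (P n ^ (2 * T n)) y z := by
      have h1 : ∑ z ∈ Gset, (pi n z - e) ≤ ∑ z ∈ Gset, (P n ^ (2 * T n)) y z :=
        Finset.sum_le_sum fun z _ => hmix2T z
      have h2 : ∑ z ∈ Gset, (pi n z - e) = (∑ z ∈ Gset, pi n z) - Gset.card * e := by
        rw [Finset.sum_sub_distrib, Finset.sum_const, nsmul_eq_mul]
      linarith [hcardG]
    have hsum_split : ∑ z ∈ Gset, ((P n ^ (2 * T n)) y z - ((killed (P n) (x n)) ^ (2 * T n)) y z)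
        = (∑ z ∈ Gset, (P n ^ (2 * T n)) y z)
          - ∑ z ∈ Gset, ((killed (P n) (x n)) ^ (2 * T n)) y z := Finset.sum_sub_distrib _ _
    linarith [hπG, hπx_small, he1le]
  -- iterate survival over 2T-windows
  have hAnn : ∀ a b : Fin n, 0 ≤ ((killed (P n) (x n)) ^ (2 * T n)) a b :=
    pow_entry_nonneg hKnn (2 * T n)
  have hv : ∀ k : ℕ, ∀ y ∈ Gset,
      ((1 : ℝ) / 2) ^ k ≤ ∑ z, (((killed (P n) (x n)) ^ (2 * T n)) ^ k) y z := by
    intro k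
    induction k with
    | zero =>
      intro y _
      simp [Matrix.one_apply]
    | succ k ih =>
      intro y hyG
      have hexp : ∑ z, (((killed (P n) (x n)) ^ (2 * T n)) ^ (k + 1)) y z
          = ∑ w, ((killed (P n) (x n)) ^ (2 * T n)) y w
              * (∑ z, (((killed (P n) (x n)) ^ (2 * T n)) ^ k) w z) := by
        simp only [pow_succ', Matrix.mul_apply]
        rw [Finset.sum_comm]
        simp_rw [← Finset.mul_sum]
      rw [hexp]
      have hvnn : ∀ w, 0 ≤ ∑ z, (((killed (P n) (x n)) ^ (2 * T n)) ^ k) w z :=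
        fun w => Finset.sum_nonneg fun z _ => pow_entry_nonneg hAnn k w z
      calc ((1 : ℝ) / 2) ^ (k + 1) = (1 / 2) ^ k * (1 / 2) := pow_succ _ _
        _ ≤ (1 / 2) ^ k * ∑ w ∈ Gset, ((killed (P n) (x n)) ^ (2 * T n)) y w :=
            mul_le_mul_of_nonneg_left (hkey y hyG) (by positivity)
        _ = ∑ w ∈ Gset, ((killed (P n) (x n)) ^ (2 * T n)) y w * (1 / 2) ^ k := by
            rw [Finset.mul_sum]
            exact Finset.sum_congr rfl fun w _ => mul_comm _ _
        _ ≤ ∑ w ∈ Gset, ((killed (P n) (x n)) ^ (2 * T n)) y w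
              * (∑ z, (((killed (P n) (x n)) ^ (2 * T n)) ^ k) w z) :=
            Finset.sum_le_sum fun w hw => mul_le_mul_of_nonneg_left (ih w hw) (hAnn y w)
        _ ≤ ∑ w, ((killed (P n) (x n)) ^ (2 * T n)) y w
              * (∑ z, (((killed (P n) (x n)) ^ (2 * T n)) ^ k) w z) := by
            refine Finset.sum_le_sum_of_subset_of_nonneg (Finset.subset_univ _) fun w _ _ => ?_
            exact mul_nonneg (hAnn y w) (hvnn w)
  -- positivity of mu at z₀
  have hy₀ : ∃ y₀, 0 < mu n y₀ := by
    by_contra hcon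
    push_neg at hcon
    have : ∑ y, mu n y ≤ 0 := Finset.sum_nonpos fun y _ => hcon y
    rw [hμsum] at this
    linarith
  obtain ⟨y₀, hy₀pos⟩ := hy₀
  have hy₀x : y₀ ≠ x n := by
    intro h
    rw [h, hμx] at hy₀pos
    exact lt_irrefl 0 hy₀pos
  have hz₀x : z₀ ≠ x n := (hGsub z₀ hz₀G).1
  obtain ⟨t₀, ht₀⟩ := hkirr n h2n y₀ z₀ hy₀x hz₀x
  have hμz₀ : 0 < mu n z₀ := by
    have heq : Matrix.vecMul (mu n) ((killed (P n) (x n)) ^ t₀) z₀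
        = lam n ^ t₀ * mu n z₀ := by
      rw [vecMul_pow_eig hμeig t₀]
      simp
    have hge : mu n y₀ * ((killed (P n) (x n)) ^ t₀) y₀ z₀
        ≤ Matrix.vecMul (mu n) ((killed (P n) (x n)) ^ t₀) z₀ := by
      rw [vecMul_apply']
      exact Finset.single_le_sum
        (fun y (_ : y ∈ Finset.univ) => mul_nonneg (hμnn y) (pow_entry_nonneg hKnn t₀ y z₀))
        (Finset.mem_univ y₀)
    have hpos : 0 < lam n ^ t₀ * mu n z₀ := by
      rw [← heq]
      exact lt_of_lt_of_le (mul_pos hy₀pos ht₀) hge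
    by_contra hle
    push_neg at hle
    nlinarith [pow_pos hlam0 t₀]
  have hlamsum : ∀ k : ℕ, mu n z₀ * ((1 : ℝ) / 2) ^ k ≤ (lam n ^ (2 * T n)) ^ k := by
    intro k
    have hsum : ∑ y, mu n y * (∑ z, (((killed (P n) (x n)) ^ (2 * T n)) ^ k) y z)
        = lam n ^ (2 * T n * k) := by
      rw [← pow_mul]
      calc ∑ y, mu n y * (∑ z, ((killed (P n) (x n)) ^ (2 * T n * k)) y z)
          = ∑ z, ∑ y, mu n y * ((killed (P n) (x n)) ^ (2 * T n * k)) y z := by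
            simp_rw [Finset.mul_sum]
            exact Finset.sum_comm
        _ = ∑ z, Matrix.vecMul (mu n) ((killed (P n) (x n)) ^ (2 * T n * k)) z := by
            simp_rw [vecMul_apply']
        _ = ∑ z, lam n ^ (2 * T n * k) * mu n z := by
            rw [vecMul_pow_eig hμeig]
            simp
        _ = lam n ^ (2 * T n * k) := by
            rw [← Finset.mul_sum, hμsum, mul_one]
    have h1 : mu n z₀ * ((1 : ℝ) / 2) ^ k
        ≤ mu n z₀ * (∑ z, (((killed (P n) (x n)) ^ (2 * T n)) ^ k) z₀ z) :=
      mul_le_mul_of_nonneg_left (hv k z₀ hz₀G) (le_of_lt hμz₀)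
    have h2 : mu n z₀ * (∑ z, (((killed (P n) (x n)) ^ (2 * T n)) ^ k) z₀ z)
        ≤ ∑ y, mu n y * (∑ z, (((killed (P n) (x n)) ^ (2 * T n)) ^ k) y z) :=
      Finset.single_le_sum
        (fun y (_ : y ∈ Finset.univ) => mul_nonneg (hμnn y)
          (Finset.sum_nonneg fun z _ => pow_entry_nonneg hAnn k y z))
        (Finset.mem_univ z₀)
    have hpow : lam n ^ (2 * T n * k) = (lam n ^ (2 * T n)) ^ k := pow_mul _ _ _
    rw [hpow] at hsum
    linarith [h1, h2, hsum]
  have hhalf : (1 : ℝ) / 2 ≤ lam n ^ (2 * T n) := by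
    by_contra hcon
    push_neg at hcon
    have h0 : (0 : ℝ) ≤ 2 * lam n ^ (2 * T n) := by positivity
    have h1 : 2 * lam n ^ (2 * T n) < 1 := by linarith
    have htend := tendsto_pow_atTop_nhds_zero_of_lt_one h0 h1
    have hbnd : ∀ k : ℕ, mu n z₀ ≤ (2 * lam n ^ (2 * T n)) ^ k := by
      intro k
      have h2k : (0 : ℝ) < (2 : ℝ) ^ k := by positivity
      have hhalftwo : ((1 : ℝ) / 2) ^ k * 2 ^ k = 1 := by
        rw [← mul_pow]
        norm_num
      rw [mul_pow]
      calc mu n z₀ = mu n z₀ * (((1 : ℝ) / 2) ^ k * 2 ^ k) := by rw [hhalftwo, mul_one]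
        _ = (mu n z₀ * ((1 : ℝ) / 2) ^ k) * 2 ^ k := by ring
        _ ≤ (lam n ^ (2 * T n)) ^ k * 2 ^ k :=
            mul_le_mul_of_nonneg_right (hlamsum k) (le_of_lt h2k)
        _ = 2 ^ k * (lam n ^ (2 * T n)) ^ k := mul_comm _ _
    obtain ⟨k, hk⟩ := (htend.eventually_lt_const hμz₀).exists
    exact absurd (hbnd k) (not_le.mpr hk)
  have hq : (1 : ℝ) / 2 ≤ lam n ^ T n := by
    have hp1 : lam n ^ T n ≤ 1 := pow_le_one₀ (le_of_lt hlam0) (le_of_lt hlam1)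
    have hpnn : 0 ≤ lam n ^ T n := pow_nonneg (le_of_lt hlam0) _
    have h1 : lam n ^ (2 * T n) ≤ lam n ^ T n := by
      rw [two_mul, pow_add]
      nlinarith
    linarith
  -- STEP 2: lam^T (1 - lam) ≤ pi x + e
  have hμPx : Matrix.vecMul (mu n) (P n) (x n) = 1 - lam n := by
    have htot : ∑ z, Matrix.vecMul (mu n) (P n) z = 1 := by
      simp_rw [vecMul_apply']
      rw [Finset.sum_comm]
      simp_rw [← Finset.mul_sum, hProw, mul_one]
      exact hμsum
    have hoff : ∀ z : Fin n, z ≠ x n → Matrix.vecMul (mu n) (P n) z = lam n * mu n z := by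
      intro z hz
      have h1 : Matrix.vecMul (mu n) (killed (P n) (x n)) z = lam n * mu n z := by
        rw [hμeig]; simp
      rw [← h1, vecMul_apply', vecMul_apply']
      refine Finset.sum_congr rfl fun y _ => ?_
      by_cases hy : y = x n
      · subst hy
        rw [hμx]
        ring
      · rw [killed_apply]
        simp [hy, hz]
    have hsplit : Matrix.vecMul (mu n) (P n) (x n)
        + ∑ z ∈ Finset.univ.erase (x n), Matrix.vecMul (mu n) (P n) z = 1 := by
      rw [Finset.add_sum_erase _ _ (Finset.mem_univ (x n))]
      exact htot
    have herase : ∑ z ∈ Finset.univ.erase (x n), Matrix.vecMul (mu n) (P n) z = lam n := by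
      rw [Finset.sum_congr rfl (fun z hz => hoff z (Finset.mem_erase.mp hz).1)]
      rw [← Finset.mul_sum, Finset.sum_erase_eq_sub (Finset.mem_univ (x n)), hμsum, hμx]
      ring
    linarith
  have hstep2a : lam n ^ T n * (1 - lam n) ≤ Matrix.vecMul (mu n) (P n ^ (T n + 1)) (x n) := by
    have hge := vecMul_pow_ge hμnn hPnn hKle hμeig (le_of_lt hlam0) (T n)
    rw [pow_succ, ← Matrix.vecMul_vecMul, vecMul_apply']
    calc lam n ^ T n * (1 - lam n) = lam n ^ T n * Matrix.vecMul (mu n) (P n) (x n) := by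
          rw [hμPx]
      _ = ∑ w, (lam n ^ T n * mu n w) * P n w (x n) := by
          rw [vecMul_apply', Finset.mul_sum]
          exact Finset.sum_congr rfl fun w _ => by ring
      _ ≤ ∑ w, Matrix.vecMul (mu n) (P n ^ T n) w * P n w (x n) :=
          Finset.sum_le_sum fun w _ => mul_le_mul_of_nonneg_right (hge w) (hPnn w (x n))
  have hstep2b : Matrix.vecMul (mu n) (P n ^ (T n + 1)) (x n) ≤ pi n (x n) + e := by
    rw [vecMul_apply']
    have hub : ∀ y : Fin n, (P n ^ (T n + 1)) y (x n) ≤ pi n (x n) + e := by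
      intro y
      have := hmix_ub 1 y (x n)
      rwa [show 1 + T n = T n + 1 by omega] at this
    calc ∑ y, mu n y * (P n ^ (T n + 1)) y (x n)
        ≤ ∑ y, mu n y * (pi n (x n) + e) :=
          Finset.sum_le_sum fun y _ => mul_le_mul_of_nonneg_left (hub y) (hμnn y)
      _ = pi n (x n) + e := by rw [← Finset.sum_mul, hμsum, one_mul]
  have hstep2 : lam n ^ T n * (1 - lam n) ≤ pi n (x n) + e := le_trans hstep2a hstep2b
  have h1lam : 1 - lam n ≤ 2 * (pi n (x n) + e) := by
    have h := mul_le_mul_of_nonneg_right hq (le_of_lt (sub_pos.mpr hlam1))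
    nlinarith
  have hbern : 1 - lam n ^ T n ≤ (T n : ℝ) * (1 - lam n) := by
    have hb := one_add_mul_le_pow (a := lam n - 1) (by linarith) (T n)
    have heq : (1 + (lam n - 1)) = lam n := by ring
    rw [heq] at hb
    linarith
  have hfinal : 1 - lam n ^ T n ≤ 4 * e1 := by
    have h1 : (T n : ℝ) * (1 - lam n) ≤ (T n : ℝ) * (2 * (pi n (x n) + e)) := by
      refine mul_le_mul_of_nonneg_left h1lam ?_
      positivity
    have h2 : (T n : ℝ) * (2 * (pi n (x n) + e))
        = 2 * ((T n : ℝ) * pi n (x n)) + 2 * ((T n : ℝ) * e) := by ring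
    have h3 := hTπ (x n)
    have h4 : e1 * e1 ≤ e1 := by nlinarith [he1le, he1pos]
    linarith [hbern, hTe]
  rw [Real.dist_eq]
  have hle1 : lam n ^ T n ≤ 1 := pow_le_one₀ (le_of_lt hlam0) (le_of_lt hlam1)
  rw [abs_of_nonpos (by linarith)]
  have : 4 * e1 ≤ ε / 2 := by linarith
  linarith
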